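/- Let λ = Σ_{i=1}^q λ_i^δ (δ_i − δ_{p+i}) + Σ_{j=1}^s λ_j^ε (ε_j − ε_{r+j}) be a weight of gl(p+q|r+s) vanishing on h ∩ k (r ≥ s, p ≥ q). Suppose ⟨λ, α⟩ ∈ 2ℕ for every positive restricted root α in Σ⁺ = {i a_i^B, i(a_i^B + a_k^B), i a_j^F, i(a_j^F + a_l^F), i(a_i^B ± a_j^F)} ∪ {i(a_i^B − a_j^B), i(a_i^F − a_j^F) : i < j}, where i a_i^B = ½(δ_{p+i} − δ_i) and i a_j^F = ½(ε_{r+j} − ε_j). Then −λ_1^δ ≥ ⋯ ≥ −λ_q^δ ≥ λ_1^ε ≥ ⋯ ≥ λ_s^ε ≥ 0 and all λ_i^δ, λ_j^ε are even integers. -/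
import Mathlib


noncomputable section

/-- The basis weight `δ_i` (for `Sum.inl i`) resp. `ε_j` (for `Sum.inr j`), 0-based. -/
def wtN (a : ℕ ⊕ ℕ) : (ℕ ⊕ ℕ) → ℝ := Pi.single a 1

/-- The invariant form with `⟨δ_i,δ_j⟩ = δ_{ij}` (`i,j < m`), `⟨ε_i,ε_j⟩ = −δ_{ij}`
(`i,j < n`), `⟨δ_i,ε_j⟩ = 0`. -/
def wformN (m n : ℕ) (v w : (ℕ ⊕ ℕ) → ℝ) : ℝ :=
  (∑ i ∈ Finset.range m, v (Sum.inl i) * w (Sum.inl i)) -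
    ∑ j ∈ Finset.range n, v (Sum.inr j) * w (Sum.inr j)

/-- The restricted root generator `i a_i^B = ½(δ_{p+i} − δ_i)`. -/
def abN (p : ℕ) (i : ℕ) : (ℕ ⊕ ℕ) → ℝ :=
  (2⁻¹ : ℝ) • (wtN (Sum.inl (p + i)) - wtN (Sum.inl i))

/-- The restricted root generator `i a_j^F = ½(ε_{r+j} − ε_j)`. -/
def afN (r : ℕ) (j : ℕ) : (ℕ ⊕ ℕ) → ℝ :=
  (2⁻¹ : ℝ) • (wtN (Sum.inr (r + j)) - wtN (Sum.inr j))

/-- The positive restricted root system `Σ⁺` of `gl(p+q|r+s)` in type AIII|AIII. -/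
def sigmaPlusN (p q r s : ℕ) : Set ((ℕ ⊕ ℕ) → ℝ) :=
  {v | ∃ i < q, v = abN p i} ∪
  {v | ∃ i < q, ∃ k < q, v = abN p i + abN p k} ∪
  {v | ∃ j < s, v = afN r j} ∪
  {v | ∃ j < s, ∃ l < s, v = afN r j + afN r l} ∪
  {v | ∃ i < q, ∃ j < s, v = abN p i - afN r j} ∪
  {v | ∃ i < q, ∃ j < s, v = abN p i + afN r j} ∪
  {v | ∃ i, ∃ j, i < j ∧ j < q ∧ v = abN p i - abN p j} ∪
  {v | ∃ i, ∃ j, i < j ∧ j < s ∧ v = afN r i - afN r j}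

/-- The weight `λ = Σ_i λ_i^δ (δ_i − δ_{p+i}) + Σ_j λ_j^ε (ε_j − ε_{r+j})`,
vanishing on `h ∩ k`. -/
def lamVecN (p q r s : ℕ) (ld le : ℕ → ℝ) : (ℕ ⊕ ℕ) → ℝ :=
  (∑ i ∈ Finset.range q, ld i • (wtN (Sum.inl i) - wtN (Sum.inl (p + i)))) +
    ∑ j ∈ Finset.range s, le j • (wtN (Sum.inr j) - wtN (Sum.inr (r + j)))

lemma lam_inl (p q r s : ℕ) (ld le : ℕ → ℝ) (t : ℕ) :
    lamVecN p q r s ld le (Sum.inl t) =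
      ∑ i ∈ Finset.range q,
        ld i * ((if t = i then (1:ℝ) else 0) - (if t = p + i then 1 else 0)) := by
  simp [lamVecN, wtN, Pi.single_apply, Finset.sum_apply]

lemma lam_inr (p q r s : ℕ) (ld le : ℕ → ℝ) (t : ℕ) :
    lamVecN p q r s ld le (Sum.inr t) =
      ∑ j ∈ Finset.range s,
        le j * ((if t = j then (1:ℝ) else 0) - (if t = r + j then 1 else 0)) := by
  simp [lamVecN, wtN, Pi.single_apply, Finset.sum_apply]

lemma lam_inl_lo {p q : ℕ} (r s : ℕ) (ld le : ℕ → ℝ) {t : ℕ} (ht : t < q) (hq : q ≤ p) :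
    lamVecN p q r s ld le (Sum.inl t) = ld t := by
  rw [lam_inl]
  rw [Finset.sum_congr rfl (g := fun i => ld i * (if t = i then (1:ℝ) else 0))]
  · simp [Finset.sum_ite_eq, Finset.mem_range.2 ht]
  · intro i hi; rw [Finset.mem_range] at hi
    have : t ≠ p + i := by omega
    simp [this]

lemma lam_inl_hi {p q : ℕ} (r s : ℕ) (ld le : ℕ → ℝ) {t : ℕ} (ht : t < q) (hq : q ≤ p) :
    lamVecN p q r s ld le (Sum.inl (p + t)) = -ld t := by
  rw [lam_inl]
  rw [Finset.sum_congr rfl (g := fun i => ld i * (0 - if p + t = p + i then (1:ℝ) else 0))]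
  · simp [Finset.sum_ite_eq, Finset.mem_range.2 ht]
  · intro i hi; rw [Finset.mem_range] at hi
    have : p + t ≠ i := by omega
    simp [this]

lemma lam_inr_lo (p q : ℕ) {r s : ℕ} (ld le : ℕ → ℝ) {t : ℕ} (ht : t < s) (hr : s ≤ r) :
    lamVecN p q r s ld le (Sum.inr t) = le t := by
  rw [lam_inr]
  rw [Finset.sum_congr rfl (g := fun j => le j * (if t = j then (1:ℝ) else 0))]
  · simp [Finset.sum_ite_eq, Finset.mem_range.2 ht]
  · intro j hj; rw [Finset.mem_range] at hj
    have : t ≠ r + j := by omega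
    simp [this]

lemma lam_inr_hi (p q : ℕ) {r s : ℕ} (ld le : ℕ → ℝ) {t : ℕ} (ht : t < s) (hr : s ≤ r) :
    lamVecN p q r s ld le (Sum.inr (r + t)) = -le t := by
  rw [lam_inr]
  rw [Finset.sum_congr rfl (g := fun j => le j * (0 - if r + t = r + j then (1:ℝ) else 0))]
  · simp [Finset.sum_ite_eq, Finset.mem_range.2 ht]
  · intro j hj; rw [Finset.mem_range] at hj
    have : r + t ≠ j := by omega
    simp [this]

lemma pair_ab {p q : ℕ} (r s : ℕ) (ld le : ℕ → ℝ) {i : ℕ} (hi : i < q) (hq : q ≤ p) :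
    wformN (p + q) (r + s) (lamVecN p q r s ld le) (abN p i) = -ld i := by
  unfold wformN abN
  have h1 : ∀ t, (((2:ℝ)⁻¹ • (wtN (Sum.inl (p + i)) - wtN (Sum.inl i))) (Sum.inl t)) =
      2⁻¹ * ((if t = p + i then (1:ℝ) else 0) - (if t = i then 1 else 0)) := by
    intro t; simp [wtN, Pi.single_apply]
  have h2 : ∀ t, (((2:ℝ)⁻¹ • (wtN (Sum.inl (p + i)) - wtN (Sum.inl i))) (Sum.inr t)) = 0 := by
    intro t; simp [wtN, Pi.single_apply]
  simp only [h1, h2, mul_zero, Finset.sum_const_zero, sub_zero]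
  have : ∀ t ∈ Finset.range (p + q),
      lamVecN p q r s ld le (Sum.inl t) *
        (2⁻¹ * ((if t = p + i then (1:ℝ) else 0) - (if t = i then 1 else 0))) =
      2⁻¹ * ((if t = p + i then lamVecN p q r s ld le (Sum.inl t) else 0)
        - (if t = i then lamVecN p q r s ld le (Sum.inl t) else 0)) := by
    intro t _; split_ifs <;> ring
  rw [Finset.sum_congr rfl this]
  rw [← Finset.mul_sum, Finset.sum_sub_distrib, Finset.sum_ite_eq', Finset.sum_ite_eq']
  have hm1 : p + i ∈ Finset.range (p + q) := Finset.mem_range.2 (by omega)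
  have hm2 : i ∈ Finset.range (p + q) := Finset.mem_range.2 (by omega)
  rw [if_pos hm1, if_pos hm2, lam_inl_hi r s ld le hi hq, lam_inl_lo r s ld le hi hq]
  ring

lemma pair_af (p q : ℕ) {r s : ℕ} (ld le : ℕ → ℝ) {j : ℕ} (hj : j < s) (hr : s ≤ r) :
    wformN (p + q) (r + s) (lamVecN p q r s ld le) (afN r j) = le j := by
  unfold wformN afN
  have h1 : ∀ t, (((2:ℝ)⁻¹ • (wtN (Sum.inr (r + j)) - wtN (Sum.inr j))) (Sum.inr t)) =
      2⁻¹ * ((if t = r + j then (1:ℝ) else 0) - (if t = j then 1 else 0)) := by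
    intro t; simp [wtN, Pi.single_apply]
  have h2 : ∀ t, (((2:ℝ)⁻¹ • (wtN (Sum.inr (r + j)) - wtN (Sum.inr j))) (Sum.inl t)) = 0 := by
    intro t; simp [wtN, Pi.single_apply]
  simp only [h1, h2, mul_zero, Finset.sum_const_zero, zero_sub]
  have : ∀ t ∈ Finset.range (r + s),
      lamVecN p q r s ld le (Sum.inr t) *
        (2⁻¹ * ((if t = r + j then (1:ℝ) else 0) - (if t = j then 1 else 0))) =
      2⁻¹ * ((if t = r + j then lamVecN p q r s ld le (Sum.inr t) else 0)
        - (if t = j then lamVecN p q r s ld le (Sum.inr t) else 0)) := by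
    intro t _; split_ifs <;> ring
  rw [Finset.sum_congr rfl this]
  rw [← Finset.mul_sum, Finset.sum_sub_distrib, Finset.sum_ite_eq', Finset.sum_ite_eq']
  have hm1 : r + j ∈ Finset.range (r + s) := Finset.mem_range.2 (by omega)
  have hm2 : j ∈ Finset.range (r + s) := Finset.mem_range.2 (by omega)
  rw [if_pos hm1, if_pos hm2, lam_inr_hi p q ld le hj hr, lam_inr_lo p q ld le hj hr]
  ring

lemma wform_sub (m n : ℕ) (v w1 w2 : (ℕ ⊕ ℕ) → ℝ) :
    wformN m n v (w1 - w2) = wformN m n v w1 - wformN m n v w2 := by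
  simp [wformN, mul_sub, Finset.sum_sub_distrib]; ring


/-- if `⟨λ,α⟩ ∈ 2ℕ` for all positive restricted roots `α ∈ Σ⁺`, then
`−λ_1^δ ≥ ⋯ ≥ −λ_q^δ ≥ λ_1^ε ≥ ⋯ ≥ λ_s^ε ≥ 0` and all coefficients are even integers. -/
theorem stmt11 (p q r s : ℕ) (hpq : q ≤ p) (hrs : s ≤ r) (ld le : ℕ → ℝ)
    (hpair : ∀ α ∈ sigmaPlusN p q r s,
        ∃ N : ℕ, wformN (p + q) (r + s) (lamVecN p q r s ld le) α = 2 * N) :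
    (∀ i j, i ≤ j → j < q → -ld j ≤ -ld i) ∧
    (∀ i < q, ∀ j < s, le j ≤ -ld i) ∧
    (∀ i j, i ≤ j → j < s → le j ≤ le i) ∧
    (∀ j < s, 0 ≤ le j) ∧
    (∀ i < q, 0 ≤ -ld i) ∧
    (∀ i < q, ∃ z : ℤ, ld i = 2 * z) ∧
    (∀ j < s, ∃ z : ℤ, le j = 2 * z) := by
  have hab : ∀ i, i < q → ∃ N : ℕ, -ld i = 2 * N := by
    intro i hi
    obtain ⟨N, hN⟩ := hpair (abN p i) (by
      simp only [sigmaPlusN, Set.mem_union, Set.mem_setOf_eq]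
      exact Or.inl (Or.inl (Or.inl (Or.inl (Or.inl (Or.inl (Or.inl ⟨i, hi, rfl⟩)))))))
    exact ⟨N, by rw [← pair_ab r s ld le hi hpq]; exact hN⟩
  have haf : ∀ j, j < s → ∃ N : ℕ, le j = 2 * N := by
    intro j hj
    obtain ⟨N, hN⟩ := hpair (afN r j) (by
      simp only [sigmaPlusN, Set.mem_union, Set.mem_setOf_eq]
      exact Or.inl (Or.inl (Or.inl (Or.inl (Or.inl (Or.inr ⟨j, hj, rfl⟩))))))
    exact ⟨N, by rw [← pair_af p q ld le hj hrs]; exact hN⟩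
  have habaf : ∀ i, i < q → ∀ j, j < s → ∃ N : ℕ, -ld i - le j = 2 * N := by
    intro i hi j hj
    obtain ⟨N, hN⟩ := hpair (abN p i - afN r j) (by
      simp only [sigmaPlusN, Set.mem_union, Set.mem_setOf_eq]
      exact Or.inl (Or.inl (Or.inl (Or.inr ⟨i, hi, j, hj, rfl⟩))))
    refine ⟨N, ?_⟩
    rw [wform_sub, pair_ab r s ld le hi hpq, pair_af p q ld le hj hrs] at hN
    exact hN
  have habab : ∀ i j, i < j → j < q → ∃ N : ℕ, -ld i - -ld j = 2 * N := by
    intro i j hij hj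
    obtain ⟨N, hN⟩ := hpair (abN p i - abN p j) (by
      simp only [sigmaPlusN, Set.mem_union, Set.mem_setOf_eq]
      exact Or.inl (Or.inr ⟨i, j, hij, hj, rfl⟩))
    refine ⟨N, ?_⟩
    rw [wform_sub, pair_ab r s ld le (lt_trans hij hj) hpq, pair_ab r s ld le hj hpq] at hN
    exact hN
  have hafaf : ∀ i j, i < j → j < s → ∃ N : ℕ, le i - le j = 2 * N := by
    intro i j hij hj
    obtain ⟨N, hN⟩ := hpair (afN r i - afN r j) (by
      simp only [sigmaPlusN, Set.mem_union, Set.mem_setOf_eq]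
      exact Or.inr ⟨i, j, hij, hj, rfl⟩)
    refine ⟨N, ?_⟩
    rw [wform_sub, pair_af p q ld le (lt_trans hij hj) hrs, pair_af p q ld le hj hrs] at hN
    exact hN
  refine ⟨?_, ?_, ?_, ?_, ?_, ?_, ?_⟩
  · intro i j hij hj
    rcases eq_or_lt_of_le hij with rfl | h
    · exact le_refl _
    · obtain ⟨N, hN⟩ := habab i j h hj
      nlinarith [Nat.cast_nonneg (α := ℝ) N]
  · intro i hi j hj
    obtain ⟨N, hN⟩ := habaf i hi j hj
    nlinarith [Nat.cast_nonneg (α := ℝ) N]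
  · intro i j hij hj
    rcases eq_or_lt_of_le hij with rfl | h
    · exact le_refl _
    · obtain ⟨N, hN⟩ := hafaf i j h hj
      nlinarith [Nat.cast_nonneg (α := ℝ) N]
  · intro j hj
    obtain ⟨N, hN⟩ := haf j hj
    nlinarith [Nat.cast_nonneg (α := ℝ) N]
  · intro i hi
    obtain ⟨N, hN⟩ := hab i hi
    nlinarith [Nat.cast_nonneg (α := ℝ) N]
  · intro i hi
    obtain ⟨N, hN⟩ := hab i hi
    exact ⟨-N, by push_cast; linarith⟩
  · intro j hj
    obtain ⟨N, hN⟩ := haf j hj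
    exact ⟨N, by push_cast; linarith⟩
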